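/- arXiv:2410.09257 — 5 statements merged into one kernel-verified Lean document; each statement's English description precedes it below -/
import Mathlib

section
/- Consider the one-person infinite shortest-path game on a caterpillar graph: positions are v₀, v₁, v₂, ..., with at each vₖ a choice either to move to vₖ₊₁ at cost 1/4ᵏ, or to terminate at cost 2/4ᵏ. The total cost of the play that terminates after k steps along the main path equals 1 + (2/3)(1/2 + 4^{−k}), which is strictly decreasing in k. Consequently, no terminating play achieves the infimum of the costs of all terminating plays, i.e., the game has no shortest terminating play. -/
open Finset

/-- The total cost of the terminating play after `k` steps along the main path of the
caterpillar: local costs `1, 1/4, …, 1/4^{k-1}` along the path and `2/4^k` for the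
terminating move. -/
noncomputable def catCost (k : ℕ) : ℝ :=
  (∑ i ∈ Finset.range k, (1 / 4 : ℝ) ^ i) + 2 * (1 / 4 : ℝ) ^ k

lemma catCost_eq (k : ℕ) : catCost k = 1 + (2 / 3) * (1 / 2 + (1 / 4 : ℝ) ^ k) := by
  unfold catCost
  rw [geom_sum_eq (by norm_num)]
  ring

/-- the cost of the play terminating after `k` steps equals
`1 + (2/3)(1/2 + 4^{−k})`, this is strictly decreasing in `k`, and consequently no
terminating play achieves the infimum: the one-person game has no shortest terminating
play. -/
theorem caterpillar_no_shortest_play :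
    (∀ k : ℕ, catCost k = 1 + (2 / 3) * (1 / 2 + (1 / 4 : ℝ) ^ k)) ∧
    StrictAnti catCost ∧
    ¬ ∃ k : ℕ, ∀ j : ℕ, catCost k ≤ catCost j := by
  have hanti : StrictAnti catCost := by
    intro a b hab
    rw [catCost_eq, catCost_eq]
    have : (1 / 4 : ℝ) ^ b < (1 / 4) ^ a :=
      pow_lt_pow_right_of_lt_one₀ (by norm_num) (by norm_num) hab
    nlinarith
  refine ⟨catCost_eq, hanti, ?_⟩
  rintro ⟨k, hk⟩
  exact absurd (hk (k + 1)) (not_le.2 (hanti (Nat.lt_succ_self k)))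
end

section
/- Let G = (V, E) be a finite directed graph, V partitioned into V₁, V₂ and a terminal t, with positive arc lengths r₁, r₂ : E → ℝ satisfying for each i ∈ {1,2}: (L1) for every u ∈ Vᵢ, min over arcs (u,v) leaving u of rᵢ(u,v) equals 0; (L2) for every u ∈ Vᵢ there exists an arc (u,v) with rᵢ(u,v) = 0 and r_{3−i}(u,v) ≤ 0; (L3) for every u ∈ Vᵢ there exists an arc (u,v) with r_{3−i}(u,v) = 0. Assume also every vertex has a directed path to t, and every directed cycle has positive total rᵢ-length for both i. Then the two-person shortest-path game with these data has a terminal Nash equilibrium in pure stationary strategies. -/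
open scoped Classical

variable {V : Type*}

/-- The total length of a walk, given as a list of vertices. -/
def pathCost (r : V → V → ℝ) (p : List V) : ℝ :=
  ((p.zip p.tail).map fun q => r q.1 q.2).sum

/-- A directed cycle, represented as a closed walk `v₀ v₁ ⋯ vₖ` with `v₀ = vₖ`,
whose vertices are distinct except for the first and last. -/
def IsCycleL (E : V → V → Prop) (p : List V) : Prop :=
  2 ≤ p.length ∧ List.Chain' E p ∧ p.head? = p.getLast? ∧ p.dropLast.Nodup
open scoped Classical

variable {V : Type*}

/-- A terminal position: a vertex with no outgoing arcs. -/
def IsTerm (E : V → V → Prop) (v : V) : Prop := ∀ w, ¬ E v w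

/-- The cost, for a player with local costs `r`, of the play starting at `s` determined by
the combined successor function `f`: the sum of the local costs along the play if it
reaches a terminal, and `+∞` otherwise. -/
noncomputable def playCost (E : V → V → Prop) (r : V → V → ℝ) (f : V → V) (s : V) : EReal :=
  if h : ∃ n, IsTerm E (f^[n] s) then
    (((Finset.range (Nat.find h)).sum fun i => r (f^[i] s) (f^[i + 1] s) : ℝ) : EReal)
  else ⊤

/-- The combined successor function of a strategy pair. -/
noncomputable def nextFun (V1 : Set V) (σ1 σ2 : V → V) : V → V :=
  fun u => if u ∈ V1 then σ1 u else σ2 u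

/-- `(σ1, σ2)` is a Nash equilibrium (in pure stationary strategies) of the two-person
shortest-path game: both strategies are legal, and no player can strictly decrease
their own cost by a unilateral deviation. -/
def IsNE (E : V → V → Prop) (V1 V2 : Set V) (r1 r2 : V → V → ℝ) (s : V)
    (σ1 σ2 : V → V) : Prop :=
  (∀ u ∈ V1, E u (σ1 u)) ∧ (∀ u ∈ V2, E u (σ2 u)) ∧
  (∀ σ1', (∀ u ∈ V1, E u (σ1' u)) →
    playCost E r1 (nextFun V1 σ1 σ2) s ≤ playCost E r1 (nextFun V1 σ1' σ2) s) ∧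
  (∀ σ2', (∀ u ∈ V2, E u (σ2' u)) →
    playCost E r2 (nextFun V1 σ1 σ2) s ≤ playCost E r2 (nextFun V1 σ1 σ2') s)

/-! ### Auxiliary lemmas for the proof of Statement 5 -/

private lemma pathCost_cons_of_head (r : V → V → ℝ) (a b : V) (l : List V)
    (h : l.head? = some b) : pathCost r (a :: l) = r a b + pathCost r l := by
  cases l with
  | nil => simp at h
  | cons c l' =>
    simp only [List.head?_cons, Option.some.injEq] at h
    subst h
    simp [pathCost]

private lemma iterList_eq_cons (g : V → V) (n : ℕ) (q : V) :
    (List.range (n + 1)).map (fun i => g^[i] q)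
      = q :: (List.range n).map (fun i => g^[i] (g q)) := by
  rw [List.range_succ_eq_map, List.map_cons, List.map_map]
  rfl

private lemma pathCost_iterList (r : V → V → ℝ) (g : V → V) :
    ∀ (n : ℕ) (q : V),
      pathCost r ((List.range (n + 1)).map fun i => g^[i] q)
        = ∑ i ∈ Finset.range n, r (g^[i] q) (g^[i + 1] q) := by
  intro n
  induction n with
  | zero => intro q; simp [pathCost]
  | succ n ih =>
    intro q
    rw [iterList_eq_cons,
      pathCost_cons_of_head r q (g q) _ (by rw [iterList_eq_cons]; rfl),
      ih (g q), Finset.sum_range_succ']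
    exact add_comm _ _

private lemma chain'_iterList (E : V → V → Prop) (g : V → V) :
    ∀ (n : ℕ) (q : V), (∀ i, i < n → E (g^[i] q) (g^[i + 1] q)) →
      List.Chain' E ((List.range (n + 1)).map fun i => g^[i] q) := by
  intro n
  induction n with
  | zero => intro q _; simp; exact List.isChain_singleton q
  | succ n ih =>
    intro q h
    rw [iterList_eq_cons]
    refine List.isChain_cons.mpr ⟨?_, ?_⟩
    · intro y hy
      rw [iterList_eq_cons] at hy
      simp only [List.head?_cons, Option.mem_def, Option.some.injEq] at hy
      subst hy
      have h0 := h 0 (Nat.succ_pos n)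
      simpa using h0
    · exact ih (g q) (fun i hi => by
        have := h (i + 1) (by omega)
        simpa [Function.iterate_succ_apply] using this)

/-- a finite two-person shortest-path game in which (A1) every vertex has a
path to the terminal `t`, (A2) every directed cycle has positive total length for both
players, and the lengths satisfy (L1), (L2), (L3) for both players, has a terminal Nash
equilibrium in pure stationary strategies. -/
theorem SP_game_L1_L2_L3_terminal_NE [Fintype V]
    (E : V → V → Prop) (V1 V2 : Set V) (s t : V) (r1 r2 : V → V → ℝ)
    (hV : ∀ v : V, v ∈ V1 ∨ v ∈ V2 ∨ v = t)
    (hdisj : Disjoint V1 V2) (ht1 : t ∉ V1) (ht2 : t ∉ V2)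
    (htermt : IsTerm E t)
    (hA1 : ∀ u : V, Relation.ReflTransGen E u t)
    (hA2 : ∀ c, IsCycleL E c → 0 < pathCost r1 c ∧ 0 < pathCost r2 c)
    -- (L1) for player 1 and player 2
    (hL1₁ : ∀ u ∈ V1, (∃ v, E u v ∧ r1 u v = 0) ∧ ∀ v, E u v → 0 ≤ r1 u v)
    (hL1₂ : ∀ u ∈ V2, (∃ v, E u v ∧ r2 u v = 0) ∧ ∀ v, E u v → 0 ≤ r2 u v)
    -- (L2) for player 1 and player 2
    (hL2₁ : ∀ u ∈ V1, ∃ v, E u v ∧ r1 u v = 0 ∧ r2 u v ≤ 0)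
    (hL2₂ : ∀ u ∈ V2, ∃ v, E u v ∧ r2 u v = 0 ∧ r1 u v ≤ 0)
    -- (L3) for player 1 and player 2
    (hL3₁ : ∀ u ∈ V1, ∃ v, E u v ∧ r2 u v = 0)
    (hL3₂ : ∀ u ∈ V2, ∃ v, E u v ∧ r1 u v = 0) :
    ∃ σ1 σ2 : V → V, IsNE E V1 V2 r1 r2 s σ1 σ2 ∧
      ∃ n, (nextFun V1 σ1 σ2)^[n] s = t := by
  classical
  have hV21 : ∀ v ∈ V2, v ∉ V1 := fun v hv => Set.disjoint_right.mp hdisj hv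
  -- the "cooperative" step function g, given by the (L2) witnesses
  obtain ⟨g, hgV1, hgV2, hgt⟩ :
      ∃ g : V → V, (∀ u (h : u ∈ V1), E u (g u) ∧ r1 u (g u) = 0 ∧ r2 u (g u) ≤ 0) ∧
        (∀ u (h : u ∈ V2), E u (g u) ∧ r2 u (g u) = 0 ∧ r1 u (g u) ≤ 0) ∧ g t = t := by
    refine ⟨fun u =>
      if h1 : u ∈ V1 then (hL2₁ u h1).choose
      else if h2 : u ∈ V2 then (hL2₂ u h2).choose else u, ?_, ?_, ?_⟩
    · intro u h
      simp only [dif_pos h]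
      exact (hL2₁ u h).choose_spec
    · intro u h
      simp only [dif_neg (hV21 u h), dif_pos h]
      exact (hL2₂ u h).choose_spec
    · simp only [dif_neg ht1, dif_neg ht2]
  -- the "punishment" step function p, given by the (L3) witnesses
  obtain ⟨p, hpV1, hpV2⟩ :
      ∃ p : V → V, (∀ u (h : u ∈ V1), E u (p u) ∧ r2 u (p u) = 0) ∧
        (∀ u (h : u ∈ V2), E u (p u) ∧ r1 u (p u) = 0) := by
    refine ⟨fun u =>
      if h1 : u ∈ V1 then (hL3₁ u h1).choose
      else if h2 : u ∈ V2 then (hL3₂ u h2).choose else u, ?_, ?_⟩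
    · intro u h
      simp only [dif_pos h]
      exact (hL3₁ u h).choose_spec
    · intro u h
      simp only [dif_neg (hV21 u h), dif_pos h]
      exact (hL3₂ u h).choose_spec
  -- only t is terminal
  have hterm_iff : ∀ v, IsTerm E v ↔ v = t := by
    intro v
    constructor
    · intro hv
      rcases hV v with h | h | h
      · exact absurd (hgV1 v h).1 (hv _)
      · exact absurd (hgV2 v h).1 (hv _)
      · exact h
    · rintro rfl; exact htermt
  have hgE : ∀ v, v ≠ t → E v (g v) := by
    intro v hv
    rcases hV v with h | h | h
    · exact (hgV1 v h).1
    · exact (hgV2 v h).1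
    · exact absurd h hv
  have hgr1 : ∀ v, v ≠ t → r1 v (g v) ≤ 0 := by
    intro v hv
    rcases hV v with h | h | h
    · exact le_of_eq (hgV1 v h).2.1
    · exact (hgV2 v h).2.2
    · exact absurd h hv
  have hgr2 : ∀ v, v ≠ t → r2 v (g v) ≤ 0 := by
    intro v hv
    rcases hV v with h | h | h
    · exact (hgV1 v h).2.2
    · exact le_of_eq (hgV2 v h).2.1
    · exact absurd h hv
  -- the g-play from s reaches t
  have hterm_g : ∃ n, g^[n] s = t := by
    by_contra hno
    push_neg at hno
    obtain ⟨i, j, hlt, heq⟩ : ∃ i j : ℕ, i < j ∧ g^[i] s = g^[j] s := by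
      obtain ⟨a, b, hab, he⟩ := Finite.exists_ne_map_eq_of_infinite (fun n : ℕ => g^[n] s)
      rcases hab.lt_or_gt with h | h
      · exact ⟨a, b, h, he⟩
      · exact ⟨b, a, h, he.symm⟩
    set q := g^[i] s with hq_def
    have hq : g^[j - i] q = q := by
      have h1 : g^[j - i + i] s = g^[j] s := by
        congr 1; omega
      rw [Function.iterate_add_apply] at h1
      rw [hq_def, h1, ← heq]
    have hqne : ∀ n, g^[n] q ≠ t := by
      intro n
      rw [hq_def, ← Function.iterate_add_apply]
      exact hno (n + i)
    have hper : ∃ d, 0 < d ∧ g^[d] q = q := ⟨j - i, by omega, hq⟩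
    set d := Nat.find hper with hd_def
    obtain ⟨hd_pos, hd_eq⟩ := Nat.find_spec hper
    set c := (List.range (d + 1)).map (fun i => g^[i] q) with hc_def
    have hconcat : c = (List.range d).map (fun i => g^[i] q) ++ [g^[d] q] := by
      rw [hc_def, List.range_succ, List.map_append]; rfl
    have hnodup : ∀ a b : ℕ, a < b → b < d → g^[a] q ≠ g^[b] q := by
      intro a b hab hbd heq'
      have h0 : 0 < d - b + a := by omega
      have hlt' : d - b + a < d := by omega
      apply Nat.find_min hper hlt'
      refine ⟨h0, ?_⟩
      rw [Function.iterate_add_apply, heq', ← Function.iterate_add_apply]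
      have e : d - b + b = d := by omega
      rw [e, hd_eq]
    have hcyc : IsCycleL E c := by
      refine ⟨?_, ?_, ?_, ?_⟩
      · rw [hc_def]
        simp only [List.length_map, List.length_range]
        omega
      · rw [hc_def]
        exact chain'_iterList E g d q (fun i _ => by
          rw [Function.iterate_succ_apply']
          exact hgE _ (hqne i))
      · have h1 : c.head? = some q := by
          rw [hc_def, iterList_eq_cons]; rfl
        have h2 : c.getLast? = some q := by
          rw [hconcat, List.getLast?_concat, hd_eq]
        rw [h1, h2]
      · rw [hconcat, List.dropLast_concat]
        refine List.Nodup.map_on ?_ (List.nodup_range (n := d))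
        intro a ha b hb heq'
        rw [List.mem_range] at ha hb
        rcases lt_trichotomy a b with h | h | h
        · exact absurd heq' (hnodup a b h hb)
        · exact h
        · exact absurd heq'.symm (hnodup b a h ha)
    have hpos := (hA2 c hcyc).1
    have hle : pathCost r1 c ≤ 0 := by
      rw [hc_def, pathCost_iterList]
      refine Finset.sum_nonpos (fun i _ => ?_)
      rw [Function.iterate_succ_apply']
      exact hgr1 _ (hqne i)
    linarith
  -- the terminal step and minimality
  set k := Nat.find hterm_g with hk_def
  have hk : g^[k] s = t := Nat.find_spec hterm_g
  have hkmin : ∀ n, n < k → g^[n] s ≠ t := fun n hn => Nat.find_min hterm_g hn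
  -- the strategy: follow g on the play, punish with p off the play
  obtain ⟨σ, hσA, hσN⟩ :
      ∃ σ : V → V, (∀ u, (∃ i ≤ k, g^[i] s = u) → σ u = g u) ∧
        (∀ u, ¬(∃ i ≤ k, g^[i] s = u) → σ u = p u) :=
    ⟨fun u => if (∃ i ≤ k, g^[i] s = u) then g u else p u,
      fun u hu => if_pos hu, fun u hu => if_neg hu⟩
  have hAi : ∀ i, i ≤ k → (∃ j ≤ k, g^[j] s = g^[i] s) := fun i hi => ⟨i, hi, rfl⟩
  have hσE1 : ∀ u ∈ V1, E u (σ u) := by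
    intro u hu
    by_cases hA : ∃ i ≤ k, g^[i] s = u
    · rw [hσA u hA]
      exact hgE u (fun h => ht1 (h ▸ hu))
    · rw [hσN u hA]
      exact (hpV1 u hu).1
  have hσE2 : ∀ u ∈ V2, E u (σ u) := by
    intro u hu
    by_cases hA : ∃ i ≤ k, g^[i] s = u
    · rw [hσA u hA]
      exact hgE u (fun h => ht2 (h ▸ hu))
    · rw [hσN u hA]
      exact (hpV2 u hu).1
  have hnf : nextFun V1 σ σ = σ := funext fun u => by simp [nextFun]
  have hfg : ∀ i, i ≤ k → σ^[i] s = g^[i] s := by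
    intro i
    induction i with
    | zero => intro _; rfl
    | succ n ih =>
      intro hn
      rw [Function.iterate_succ_apply', Function.iterate_succ_apply',
        ih (by omega), hσA _ (hAi n (by omega))]
  have hkT : σ^[k] s = t := by rw [hfg k le_rfl]; exact hk
  have hfterm : ∃ n, IsTerm E (σ^[n] s) := ⟨k, by rw [hkT]; exact htermt⟩
  have hfind : Nat.find hfterm = k := by
    rw [Nat.find_eq_iff]
    refine ⟨by rw [hkT]; exact htermt, fun n hn hterm => ?_⟩
    exact hkmin n hn ((hterm_iff _).mp (by rwa [hfg n (le_of_lt hn)] at hterm))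
  -- summation monotonicity helper
  have sum_mono : ∀ (s₁ s₂ : Finset ℕ) (F : ℕ → ℝ), s₁ ⊆ s₂ →
      (∀ i ∈ s₂, i ∉ s₁ → F i ≤ 0) → (∑ i ∈ s₂, F i) ≤ ∑ i ∈ s₁, F i := by
    intro s₁ s₂ F hsub hF
    have h := Finset.sum_le_sum_of_subset_of_nonneg (f := fun i => -F i) hsub
      (fun i h1 h2 => neg_nonneg.mpr (hF i h1 h2))
    simp only [Finset.sum_neg_distrib] at h
    linarith
  -- the key cost comparison
  have key : ∀ (r : V → V → ℝ) (f' : V → V),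
      (∀ i, i < k → r (g^[i] s) (g (g^[i] s)) ≤ 0) →
      (∀ v, v ≠ t → 0 ≤ r v (f' v) ∨ ((∃ i ≤ k, g^[i] s = v) ∧ f' v = g v)) →
      ∀ m, f'^[m] s = t → (∀ j, j < m → f'^[j] s ≠ t) →
      (∑ i ∈ Finset.range k, r (g^[i] s) (g^[i + 1] s))
        ≤ ∑ j ∈ Finset.range m, r (f'^[j] s) (f'^[j + 1] s) := by
    intro r f' hpath hyp m hm hmin
    have yinj : ∀ j₁ j₂, j₁ < j₂ → j₂ < m → f'^[j₁] s ≠ f'^[j₂] s := by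
      intro j₁ j₂ h12 h2m heq
      apply hmin (m - j₂ + j₁) (by omega)
      rw [Function.iterate_add_apply, heq, ← Function.iterate_add_apply]
      have e : m - j₂ + j₂ = m := by omega
      rw [e, hm]
    set J := (Finset.range m).filter
      (fun j => ¬ 0 ≤ r (f'^[j] s) (f' (f'^[j] s))) with hJ_def
    have hJfacts : ∀ j ∈ J,
        ∃ i, i < k ∧ g^[i] s = f'^[j] s ∧ f' (f'^[j] s) = g (f'^[j] s) := by
      intro j hj
      have hjm : j < m := Finset.mem_range.mp (Finset.mem_filter.mp hj).1
      have hneg : ¬ 0 ≤ r (f'^[j] s) (f' (f'^[j] s)) := (Finset.mem_filter.mp hj).2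
      have hnt : f'^[j] s ≠ t := hmin j hjm
      rcases hyp _ hnt with h | ⟨⟨i, hik, hi⟩, hfg'⟩
      · exact absurd h hneg
      · refine ⟨i, ?_, hi, hfg'⟩
        rcases Nat.lt_or_ge i k with h' | h'
        · exact h'
        · exfalso
          have hik' : i = k := by omega
          rw [hik', hk] at hi
          exact hnt hi.symm
    choose! ι hι1 hι2 hι3 using hJfacts
    have ιinj : ∀ j₁ ∈ J, ∀ j₂ ∈ J, ι j₁ = ι j₂ → j₁ = j₂ := by
      intro j₁ h1 j₂ h2 he
      have e1 := hι2 j₁ h1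
      have e2 := hι2 j₂ h2
      rw [he] at e1
      have heq : f'^[j₁] s = f'^[j₂] s := by rw [← e1, ← e2]
      by_contra hne
      rcases lt_trichotomy j₁ j₂ with h | h | h
      · exact yinj _ _ h (Finset.mem_range.mp (Finset.mem_filter.mp h2).1) heq
      · exact hne h
      · exact yinj _ _ h (Finset.mem_range.mp (Finset.mem_filter.mp h1).1) heq.symm
    calc (∑ i ∈ Finset.range k, r (g^[i] s) (g^[i + 1] s))
        = ∑ i ∈ Finset.range k, r (g^[i] s) (g (g^[i] s)) :=
          Finset.sum_congr rfl (fun i _ => by rw [Function.iterate_succ_apply'])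
      _ ≤ ∑ i ∈ J.image ι, r (g^[i] s) (g (g^[i] s)) := by
          apply sum_mono
          · intro i hi
            obtain ⟨j, hj, rfl⟩ := Finset.mem_image.mp hi
            exact Finset.mem_range.mpr (hι1 j hj)
          · intro i hik _
            exact hpath i (Finset.mem_range.mp hik)
      _ = ∑ j ∈ J, r (g^[ι j] s) (g (g^[ι j] s)) := Finset.sum_image ιinj
      _ = ∑ j ∈ J, r (f'^[j] s) (f' (f'^[j] s)) :=
          Finset.sum_congr rfl (fun j hj => by rw [hι2 j hj, ← hι3 j hj])
      _ ≤ ∑ j ∈ Finset.range m, r (f'^[j] s) (f' (f'^[j] s)) := by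
          apply Finset.sum_le_sum_of_subset_of_nonneg (Finset.filter_subset _ _)
          intro j hjm hjJ
          by_contra hc
          exact hjJ (Finset.mem_filter.mpr ⟨hjm, hc⟩)
      _ = ∑ j ∈ Finset.range m, r (f'^[j] s) (f'^[j + 1] s) :=
          Finset.sum_congr rfl (fun j _ => by rw [Function.iterate_succ_apply'])
  -- deviations can never beat the profile
  have main : ∀ (r : V → V → ℝ) (f' : V → V),
      (∀ i, i < k → r (g^[i] s) (g (g^[i] s)) ≤ 0) →
      (∀ v, v ≠ t → 0 ≤ r v (f' v) ∨ ((∃ i ≤ k, g^[i] s = v) ∧ f' v = g v)) →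
      playCost E r σ s ≤ playCost E r f' s := by
    intro r f' hpath hyp
    by_cases hd : ∃ n, IsTerm E (f'^[n] s)
    · rw [playCost, playCost, dif_pos hfterm, dif_pos hd, hfind]
      have hm : f'^[Nat.find hd] s = t := (hterm_iff _).mp (Nat.find_spec hd)
      have hminm : ∀ j, j < Nat.find hd → f'^[j] s ≠ t := by
        intro j hj hcon
        exact Nat.find_min hd hj (by rw [hcon]; exact htermt)
      have hsum := key r f' hpath hyp (Nat.find hd) hm hminm
      have hprof : (∑ i ∈ Finset.range k, r (σ^[i] s) (σ^[i + 1] s))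
          = ∑ i ∈ Finset.range k, r (g^[i] s) (g^[i + 1] s) :=
        Finset.sum_congr rfl (fun i hi => by
          rw [hfg i (le_of_lt (Finset.mem_range.mp hi)), hfg (i + 1) (Finset.mem_range.mp hi)])
      rw [hprof]
      exact_mod_cast hsum
    · rw [playCost, playCost, dif_neg hd]
      exact le_top
  refine ⟨σ, σ, ⟨hσE1, hσE2, ?_, ?_⟩, ⟨k, ?_⟩⟩
  · -- player 1 cannot improve
    intro σ1' hleg
    rw [hnf]
    refine main r1 (nextFun V1 σ1' σ) (fun i hi => hgr1 _ (hkmin i hi)) ?_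
    intro v hv
    rcases hV v with h1 | h2 | h3
    · left
      simp only [nextFun, if_pos h1]
      exact (hL1₁ v h1).2 _ (hleg v h1)
    · have hn1 : v ∉ V1 := hV21 v h2
      simp only [nextFun, if_neg hn1]
      by_cases hA : ∃ i ≤ k, g^[i] s = v
      · right
        exact ⟨hA, hσA v hA⟩
      · left
        rw [hσN v hA, (hpV2 v h2).2]
    · exact absurd h3 hv
  · -- player 2 cannot improve
    intro σ2' hleg
    rw [hnf]
    refine main r2 (nextFun V1 σ σ2') (fun i hi => hgr2 _ (hkmin i hi)) ?_
    intro v hv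
    rcases hV v with h1 | h2 | h3
    · simp only [nextFun, if_pos h1]
      by_cases hA : ∃ i ≤ k, g^[i] s = v
      · right
        exact ⟨hA, hσA v hA⟩
      · left
        rw [hσN v hA, (hpV1 v h1).2]
    · have hn1 : v ∉ V1 := hV21 v h2
      simp only [nextFun, if_neg hn1]
      left
      exact (hL1₂ v h2).2 _ (hleg v h2)
    · exact absurd h3 hv
  · -- the play reaches the terminal
    rw [hnf]
    exact hkT
end

section
/- Let G = (V, E) be a finite directed graph with terminal t, V \ {t} = V₁ ∪ V₂, and arc lengths r : E → ℝ such that every directed cycle has positive total length, and suppose every vertex in V₂ has at least one outgoing arc. Suppose r satisfies: r(u,v) ≥ 0 for all arcs leaving vertices of V₁, and for every u ∈ V₂ some arc (u,v) has r(u,v) = 0 and all arcs leaving u have r(u,v) ≤ 0 allowed only as stated, i.e. every arc leaving V₂ has r ≤ 0. Let p be a directed (s,t)-path all of whose arcs have r-length ≤ 0, and let p' be any other directed (s,t)-path that agrees with p on arcs leaving V₂ ∩ V(p) and uses only arcs of r-length 0 when leaving vertices of V₂ \ V(p). Then the total r-length of p' is at least the total r-length of p. -/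
open scoped Classical

variable {V : Type*}

/-- A directed (simple) path from `s` to `t`, as a list of vertices. -/
def IsPathL (E : V → V → Prop) (s t : V) (p : List V) : Prop :=
  List.Chain' E p ∧ p.head? = some s ∧ p.getLast? = some t ∧ p.Nodup

/-- `(u,v)` is an arc of the path `p` (a consecutive pair of vertices). -/
def ArcOf (p : List V) (u v : V) : Prop := (u, v) ∈ p.zip p.tail

lemma chain'_arc {E : V → V → Prop} : ∀ {p : List V}, List.Chain' E p →
    ∀ {u v : V}, (u, v) ∈ p.zip p.tail → E u v := by
  intro p
  induction p with
  | nil => intro _ u v h; simp at h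
  | cons a l ih =>
    intro hc u v h
    cases l with
    | nil => simp at h
    | cons b m =>
      rw [show List.Chain' E (a :: b :: m) ↔ _ from List.isChain_cons_cons] at hc
      simp only [List.tail_cons, List.zip_cons_cons, List.mem_cons] at h
      rcases h with h | h
      · cases h; exact hc.1
      · exact ih hc.2 h

lemma zip_tail_nodup {p : List V} (hp : p.Nodup) : (p.zip p.tail).Nodup := by
  have h : (p.zip p.tail).map Prod.snd = p.tail :=
    List.map_snd_zip (by cases p <;> simp)
  have := hp.tail
  rw [← h] at this
  exact List.Nodup.of_map Prod.snd this

lemma mem_of_arc {p : List V} {u v : V} (h : (u, v) ∈ p.zip p.tail) : u ∈ p := by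
  have := List.of_mem_zip h
  exact this.1

/-- exchange argument in Lemma 2.1: let all cycles have positive total
`r`-length, arcs leaving `V₁` have nonnegative `r`-length, arcs leaving `V₂` have
nonpositive `r`-length with an `r`-zero arc available at every `u ∈ V₂`.  If `p` is an
`(s,t)`-path all of whose arcs have nonpositive `r`-length, and `p'` is an `(s,t)`-path
that agrees with `p` on arcs leaving `V₂ ∩ V(p)` and uses only `r`-zero arcs when leaving
vertices of `V₂ \ V(p)`, then the total `r`-length of `p'` is at least that of `p`. -/
theorem deviation_not_improving [Fintype V]
    (E : V → V → Prop) (V1 V2 : Set V) (s t : V) (r : V → V → ℝ)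
    (hV : ∀ v : V, v ∈ V1 ∨ v ∈ V2 ∨ v = t)
    (hdisj : Disjoint V1 V2) (ht1 : t ∉ V1) (ht2 : t ∉ V2)
    (htermt : ∀ w, ¬ E t w)
    (hout2 : ∀ u ∈ V2, ∃ v, E u v)
    (hcyc : ∀ c, IsCycleL E c → 0 < pathCost r c)
    (hV1nonneg : ∀ u ∈ V1, ∀ v, E u v → 0 ≤ r u v)
    (hV2zero : ∀ u ∈ V2, ∃ v, E u v ∧ r u v = 0)
    (hV2nonpos : ∀ u ∈ V2, ∀ v, E u v → r u v ≤ 0)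
    (p p' : List V)
    (hp : IsPathL E s t p) (hp' : IsPathL E s t p')
    (hpneg : ∀ u v, ArcOf p u v → r u v ≤ 0)
    (hagree : ∀ u v', ArcOf p' u v' → u ∈ V2 → u ∈ p → ArcOf p u v')
    (hzero : ∀ u v', ArcOf p' u v' → u ∈ V2 → u ∉ p → r u v' = 0) :
    pathCost r p ≤ pathCost r p' := by
  classical
  obtain ⟨hpc, -, -, hpn⟩ := hp
  obtain ⟨hpc', -, -, hpn'⟩ := hp'
  set A : Finset (V × V) := (p.zip p.tail).toFinset with hA
  set A' : Finset (V × V) := (p'.zip p'.tail).toFinset with hA'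
  have hsum : pathCost r p = ∑ a ∈ A, r a.1 a.2 := by
    rw [hA, List.sum_toFinset _ (zip_tail_nodup hpn)]; rfl
  have hsum' : pathCost r p' = ∑ a ∈ A', r a.1 a.2 := by
    rw [hA', List.sum_toFinset _ (zip_tail_nodup hpn')]; rfl
  have h1 : ∑ a ∈ A \ A', r a.1 a.2 ≤ 0 := by
    apply Finset.sum_nonpos
    intro a ha
    have := (Finset.mem_sdiff.mp ha).1
    rw [hA, List.mem_toFinset] at this
    exact hpneg a.1 a.2 this
  have h2 : 0 ≤ ∑ a ∈ A' \ A, r a.1 a.2 := by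
    apply Finset.sum_nonneg
    intro a ha
    rw [Finset.mem_sdiff, hA, hA', List.mem_toFinset, List.mem_toFinset] at ha
    obtain ⟨hmem, hnot⟩ := ha
    have hE : E a.1 a.2 := chain'_arc hpc' hmem
    rcases hV a.1 with h | h | h
    · exact hV1nonneg a.1 h a.2 hE
    · by_cases hup : a.1 ∈ p
      · exact absurd (hagree a.1 a.2 hmem h hup) hnot
      · exact le_of_eq (hzero a.1 a.2 hmem h hup).symm
    · exact absurd hE (h ▸ htermt a.2)
  calc pathCost r p = ∑ a ∈ A ∩ A', r a.1 a.2 + ∑ a ∈ A \ A', r a.1 a.2 := by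
        rw [hsum, Finset.sum_inter_add_sum_sdiff]
    _ ≤ ∑ a ∈ A' ∩ A, r a.1 a.2 + ∑ a ∈ A' \ A, r a.1 a.2 := by
        rw [Finset.inter_comm]
        exact add_le_add le_rfl (h1.trans h2)
    _ = pathCost r p' := by rw [Finset.sum_inter_add_sum_sdiff, hsum']
end

section
/- Let p and p' be two directed simple paths from s to t in a finite directed graph with arc lengths r̄ : E → ℝ. Suppose every arc of p has r̄-length ≤ 0, every arc of p' that leaves a vertex not on p has r̄-length ≥ 0, and for every vertex u on both p and p', if (u,v) is the arc of p leaving u and (u,v') the arc of p' leaving u, then r̄(u,v') ≥ r̄(u,v). Then the total r̄-length of p' is at least the total r̄-length of p. -/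
open scoped Classical

variable {V : Type*}

/-- the source of an arc—i.e. an element of `l.zip l.tail`—belongs to `l`. -/
lemma arc_src_mem {l : List V} {u v : V} (h : (u, v) ∈ l.zip l.tail) : u ∈ l :=
  (List.of_mem_zip h).1

/-- in a nodup list, the source of an arc determines its target. -/
lemma arc_src_unique : ∀ {l : List V}, l.Nodup → ∀ {u v v' : V},
    (u, v) ∈ l.zip l.tail → (u, v') ∈ l.zip l.tail → v = v' := by
  intro l
  induction l with
  | nil => intro _ u v v' h1; simp at h1
  | cons a l ih =>
    intro hnd u v v' h1 h2
    cases l with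
    | nil => simp at h1
    | cons b l' =>
      simp only [List.tail_cons, List.zip_cons_cons, List.mem_cons, Prod.mk.injEq] at h1 h2
      rcases h1 with ⟨rfl, rfl⟩ | h1
      · rcases h2 with ⟨-, rfl⟩ | h2
        · rfl
        · exact absurd (arc_src_mem h2) (List.nodup_cons.1 hnd).1
      · rcases h2 with ⟨rfl, rfl⟩ | h2
        · exact absurd (arc_src_mem h1) (List.nodup_cons.1 hnd).1
        · exact ih (List.nodup_cons.1 hnd).2 h1 h2

/-- in a nodup list, the list of arcs is nodup. -/
lemma arcs_nodup : ∀ {l : List V}, l.Nodup → (l.zip l.tail).Nodup := by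
  intro l
  induction l with
  | nil => intro _; simp
  | cons a l ih =>
    intro hnd
    cases l with
    | nil => simp
    | cons b l' =>
      simp only [List.tail_cons, List.zip_cons_cons]
      refine List.nodup_cons.2 ⟨fun hmem => ?_, ih (List.nodup_cons.1 hnd).2⟩
      exact absurd (arc_src_mem (l := b :: l') hmem) (List.nodup_cons.1 hnd).1

/-- a vertex of a list which is not its last element is the source of some arc. -/
lemma arc_exists : ∀ {l : List V} {u t : V}, u ∈ l → l.getLast? = some t → u ≠ t →
    ∃ v, (u, v) ∈ l.zip l.tail := by
  intro l
  induction l with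
  | nil => intro u t h; simp at h
  | cons a l ih =>
    intro u t hu hl hne
    cases l with
    | nil =>
      simp only [List.getLast?_singleton, Option.some.injEq] at hl
      simp only [List.mem_singleton] at hu
      exact absurd (hu.trans hl) hne
    | cons b l' =>
      rcases List.mem_cons.1 hu with rfl | hu
      · exact ⟨b, by simp⟩
      · have hl2 : (b :: l').getLast? = some t := by
          rw [← hl]; exact (List.getLast?_cons_cons ..).symm
        obtain ⟨v, hv⟩ := ih hu hl2 hne
        exact ⟨v, by simp only [List.tail_cons, List.zip_cons_cons, List.mem_cons]; right; exact hv⟩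

/-- in a nodup list, the source of an arc is not the last element. -/
lemma arc_src_ne_last : ∀ {l : List V}, l.Nodup → ∀ {u v t : V},
    (u, v) ∈ l.zip l.tail → l.getLast? = some t → u ≠ t := by
  intro l
  induction l with
  | nil => intro _ u v t h; simp at h
  | cons a l ih =>
    intro hnd u v t h hl
    cases l with
    | nil => simp at h
    | cons b l' =>
      have hl2 : (b :: l').getLast? = some t := by
        rw [← hl]; exact (List.getLast?_cons_cons ..).symm
      simp only [List.tail_cons, List.zip_cons_cons, List.mem_cons, Prod.mk.injEq] at h
      rcases h with ⟨rfl, rfl⟩ | h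
      · have : t ∈ v :: l' := List.mem_of_getLast? hl2
        rintro rfl
        exact (List.nodup_cons.1 hnd).1 this
      · exact ih (List.nodup_cons.1 hnd).2 h hl2

/-- exchange argument of Lemma 4.2: if every arc of `p` has `r̄`-length
`≤ 0`, every arc of `p'` leaving a vertex not on `p` has `r̄`-length `≥ 0`, and at every
common vertex the arc of `p'` is at least as long as the arc of `p`, then the total
`r̄`-length of `p'` is at least that of `p`. -/
theorem exchange_argument [Fintype V]
    (E : V → V → Prop) (s t : V) (rbar : V → V → ℝ)
    (p p' : List V)
    (hp : IsPathL E s t p) (hp' : IsPathL E s t p')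
    (hpneg : ∀ u v, ArcOf p u v → rbar u v ≤ 0)
    (hoff : ∀ u v', ArcOf p' u v' → u ∉ p → 0 ≤ rbar u v')
    (hcmp : ∀ u v v', ArcOf p u v → ArcOf p' u v' → rbar u v ≤ rbar u v') :
    pathCost rbar p ≤ pathCost rbar p' := by
  obtain ⟨-, -, hlast, hnd⟩ := hp
  obtain ⟨-, -, hlast', hnd'⟩ := hp'
  set L : List (V × V) := p.zip p.tail with hL
  set L' : List (V × V) := p'.zip p'.tail with hL'
  have hLnd : L.Nodup := arcs_nodup hnd
  have hL'nd : L'.Nodup := arcs_nodup hnd'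
  have hcostp : pathCost rbar p = ∑ q ∈ L.toFinset, rbar q.1 q.2 := by
    rw [pathCost, ← List.sum_toFinset _ hLnd]
  have hcostp' : pathCost rbar p' = ∑ q ∈ L'.toFinset, rbar q.1 q.2 := by
    rw [pathCost, ← List.sum_toFinset _ hL'nd]
  -- the successor function along `p`
  let nxt : V → V := fun u => if h : ∃ v, (u, v) ∈ L then h.choose else u
  have hnxt : ∀ u : V, (∃ v, (u, v) ∈ L) → (u, nxt u) ∈ L := by
    intro u h
    simp only [nxt, dif_pos h]
    exact h.choose_spec
  -- the arcs of `p'` whose source lies on `p`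
  set T : Finset (V × V) := L'.toFinset.filter (fun q => q.1 ∈ p) with hT
  let φ : V × V → V × V := fun q => (q.1, nxt q.1)
  have hTmem : ∀ q ∈ T, q ∈ L'.toFinset ∧ q.1 ∈ p := fun q hq => Finset.mem_filter.1 hq
  have hφarc : ∀ q ∈ T, (q.1, nxt q.1) ∈ L := by
    intro q hq
    obtain ⟨hq1, hq2⟩ := hTmem q hq
    have hq1' : q ∈ L' := List.mem_toFinset.1 hq1
    have hne : q.1 ≠ t := arc_src_ne_last hnd' (u := q.1) (v := q.2) hq1' hlast'
    exact hnxt q.1 (arc_exists hq2 hlast hne)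
  have hφmem : ∀ q ∈ T, φ q ∈ L.toFinset := fun q hq => List.mem_toFinset.2 (hφarc q hq)
  have hφinj : ∀ x ∈ T, ∀ y ∈ T, φ x = φ y → x = y := by
    intro x hx y hy hxy
    simp only [φ, Prod.mk.injEq] at hxy
    have h1 : x.1 = y.1 := hxy.1
    have hx' : x ∈ L' := List.mem_toFinset.1 (hTmem x hx).1
    have hy' : y ∈ L' := List.mem_toFinset.1 (hTmem y hy).1
    have hx'' : (x.1, x.2) ∈ L' := by rwa [Prod.mk.eta]
    have hy'' : (x.1, y.2) ∈ L' := by rw [h1, Prod.mk.eta]; exact hy'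
    have h2 : x.2 = y.2 := arc_src_unique hnd' hx'' hy''
    exact Prod.ext h1 h2
  have step1 : pathCost rbar p ≤ ∑ q ∈ T.image φ, rbar q.1 q.2 := by
    rw [hcostp]
    have hsub : T.image φ ⊆ L.toFinset := Finset.image_subset_iff.2 hφmem
    rw [← Finset.sum_sdiff hsub]
    have : ∑ q ∈ L.toFinset \ T.image φ, rbar q.1 q.2 ≤ 0 := by
      apply Finset.sum_nonpos
      intro q hq
      have : q ∈ L := List.mem_toFinset.1 (Finset.mem_sdiff.1 hq).1
      exact hpneg q.1 q.2 (by rwa [ArcOf, Prod.mk.eta])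
    linarith
  have step2 : ∑ q ∈ T.image φ, rbar q.1 q.2 ≤ ∑ q ∈ T, rbar q.1 q.2 := by
    rw [Finset.sum_image hφinj]
    apply Finset.sum_le_sum
    intro q hq
    have hq' : (q.1, q.2) ∈ L' := by
      rw [Prod.mk.eta]; exact List.mem_toFinset.1 (hTmem q hq).1
    exact hcmp q.1 (nxt q.1) q.2 (hφarc q hq) hq'
  have step3 : ∑ q ∈ T, rbar q.1 q.2 ≤ pathCost rbar p' := by
    rw [hcostp']
    apply Finset.sum_le_sum_of_subset_of_nonneg (Finset.filter_subset _ _)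
    intro q hq hnq
    have hq' : (q.1, q.2) ∈ L' := by rw [Prod.mk.eta]; exact List.mem_toFinset.1 hq
    have : q.1 ∉ p := fun h => hnq (Finset.mem_filter.2 ⟨hq, h⟩)
    exact hoff q.1 q.2 hq' this
  linarith
end

section
/- In the modified Dijkstra algorithm with blocking systems: given a finite directed graph G = (V, E) with nonnegative arc weights r, target t, and an independence system ℐ(u) on the outgoing arcs of each u ≠ t with E(u) ∉ ℐ(u), the algorithm outputs φ : V → ℝ ∪ {+∞} and blocking sets Î(u) ∈ ℐ(u) such that for every u ≠ t with φ(u) < +∞: φ(u) ≥ r(u,v) + φ(v) for all (u,v) ∈ Î(u); φ(u) ≤ r(u,v) + φ(v) for all unblocked arcs (u,v) ∈ E(u) \ Î(u); φ(u) = r(u,v_u) + φ(v_u) for some unblocked arc (u, v_u); and the set {(u,v) ∈ E(u) : φ(u) ≥ r(u,v) + φ(v)} is dependent (not in ℐ(u)). Consequently φ(u) equals the maximum, over all admissible subgraphs (obtained by removing an independent set of arcs at each vertex), of the shortest r-distance from u to t. -/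
open scoped Classical

variable {V : Type*}

/-- The shortest `r`-distance from `u` to `t` in the subgraph obtained by blocking, at
each vertex `w`, the arcs leading to `I w` (`+∞` if there is no such path). -/
noncomputable def blockedDist (E : V → V → Prop) (r : V → V → ℝ) (t : V)
    (I : V → Set V) (u : V) : EReal :=
  sInf {c : EReal | ∃ p, IsPathL (fun a b => E a b ∧ b ∉ I a) u t p ∧
    c = (pathCost r p : ℝ)}

lemma pathCost_cons (r : V → V → ℝ) (a b : V) (l : List V) :
    pathCost r (a :: b :: l) = r a b + pathCost r (b :: l) := by
  simp [pathCost]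

lemma pathCost_suffix_le (r : V → V → ℝ) (P : V → V → Prop)
    (hnn : ∀ a b, P a b → 0 ≤ r a b) :
    ∀ (p s : List V), List.Chain' P p → s <:+ p → pathCost r s ≤ pathCost r p := by
  intro p
  induction p with
  | nil => intro s _ hs; rw [List.suffix_nil.1 hs]
  | cons a l ih =>
    intro s hc hs
    rcases List.suffix_cons_iff.1 hs with h | h
    · rw [h]
    · refine (ih s hc.tail h).trans ?_
      cases l with
      | nil => simp [pathCost]
      | cons b l' =>
        rw [pathCost_cons]
        have := hnn a b (List.isChain_cons_cons.1 hc).1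
        linarith

lemma isPathL_singleton (E : V → V → Prop) (t : V) : IsPathL E t t [t] := by
  refine ⟨List.isChain_singleton _, rfl, rfl, by simp⟩

/-- Extend a path by one unblocked arc, possibly shortcutting to keep it simple. -/
lemma exists_path_cons (E' : V → V → Prop) (r : V → V → ℝ)
    (hnn : ∀ a b, E' a b → 0 ≤ r a b) {u v t : V} (huv : E' u v)
    {p : List V} (hp : IsPathL E' v t p) :
    ∃ q, IsPathL E' u t q ∧ pathCost r q ≤ r u v + pathCost r p := by
  obtain ⟨hchain, hhead, hlast, hnodup⟩ := hp
  cases p with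
  | nil => simp at hhead
  | cons v' p' =>
    have hv' : v' = v := by simpa using hhead
    subst hv'
    by_cases hu : u ∈ v' :: p'
    · obtain ⟨p₁, p₂, hsplit⟩ := List.append_of_mem hu
      refine ⟨u :: p₂, ⟨?_, rfl, ?_, ?_⟩, ?_⟩
      · exact hchain.suffix ⟨p₁, hsplit.symm⟩
      · rw [hsplit] at hlast
        rwa [List.getLast?_append_cons] at hlast
      · rw [hsplit] at hnodup
        exact hnodup.sublist (List.sublist_append_right p₁ (u :: p₂))
      · have h1 : pathCost r (u :: p₂) ≤ pathCost r (v' :: p') := by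
          refine pathCost_suffix_le r E' hnn _ _ hchain ⟨p₁, hsplit.symm⟩
        have := hnn u v' huv
        linarith
    · refine ⟨u :: v' :: p', ⟨List.isChain_cons_cons.2 ⟨huv, hchain⟩, rfl, ?_, ?_⟩, ?_⟩
      · rwa [List.getLast?_cons_cons]
      · exact List.nodup_cons.2 ⟨hu, hnodup⟩
      · rw [pathCost_cons]

lemma blockedDist_self_le (E : V → V → Prop) (r : V → V → ℝ) (t : V) (I : V → Set V) :
    blockedDist E r t I t ≤ 0 := by
  refine sInf_le ⟨[t], isPathL_singleton _ t, ?_⟩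
  simp [pathCost]

lemma blockedDist_triangle (E : V → V → Prop) (r : V → V → ℝ) (t : V) (I : V → Set V)
    (hnn : ∀ a b, E a b → 0 ≤ r a b) {u v : V} (huv : E u v) (hv : v ∉ I u) :
    blockedDist E r t I u ≤ (r u v : EReal) + blockedDist E r t I v := by
  rw [add_comm, ← EReal.sub_le_iff_le_add (Or.inl (EReal.coe_ne_bot _))
    (Or.inl (EReal.coe_ne_top _))]
  refine le_sInf ?_
  rintro c ⟨p, hp, rfl⟩
  rw [EReal.sub_le_iff_le_add (Or.inl (EReal.coe_ne_bot _)) (Or.inl (EReal.coe_ne_top _))]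
  obtain ⟨q, hq, hcost⟩ := exists_path_cons (fun a b => E a b ∧ b ∉ I a) r
    (fun a b h => hnn a b h.1) ⟨huv, hv⟩ hp
  calc blockedDist E r t I u ≤ ((pathCost r q : ℝ) : EReal) := sInf_le ⟨q, hq, rfl⟩
    _ ≤ (((pathCost r p) + r u v : ℝ) : EReal) := by
        exact_mod_cast by linarith
    _ = ((pathCost r p : ℝ) : EReal) + (r u v : EReal) := by
        exact_mod_cast rfl

/-- The Bellman-type blocking-threshold operator of the modified Dijkstra algorithm. -/
noncomputable def dijkF (E : V → V → Prop) (t : V) (r : V → V → ℝ)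
    (𝓘 : V → Set (Set V)) (ψ : V → EReal) (u : V) : EReal :=
  if u = t then 0 else
    sInf {d : EReal | {v | E u v ∧ (r u v : EReal) + ψ v ≤ d} ∉ 𝓘 u}

lemma dijkF_mono (E : V → V → Prop) (t : V) (r : V → V → ℝ) (𝓘 : V → Set (Set V))
    (hdc : ∀ u, u ≠ t → ∀ I ∈ 𝓘 u, ∀ J ⊆ I, J ∈ 𝓘 u) :
    Monotone (dijkF E t r 𝓘) := by
  intro ψ ψ' h u
  unfold dijkF
  split
  · exact le_rfl
  · rename_i hu
    refine sInf_le_sInf ?_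
    intro d hd hmem
    exact hd (hdc u hu _ hmem _ (fun v hv => ⟨hv.1,
      (add_le_add_right (h v) _).trans hv.2⟩))

lemma dijkF_le (E : V → V → Prop) (t : V) (r : V → V → ℝ) (𝓘 : V → Set (Set V))
    (ψ : V → EReal) {u : V} (hu : u ≠ t) {d : EReal}
    (hd : {v | E u v ∧ (r u v : EReal) + ψ v ≤ d} ∉ 𝓘 u) :
    dijkF E t r 𝓘 ψ u ≤ d := by
  rw [dijkF, if_neg hu]
  exact sInf_le hd

/-- The threshold is attained: the set of arcs at or below it is dependent. -/
lemma dijkF_mem [Fintype V] (E : V → V → Prop) (t : V) (r : V → V → ℝ)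
    (𝓘 : V → Set (Set V))
    (hdc : ∀ u, u ≠ t → ∀ I ∈ 𝓘 u, ∀ J ⊆ I, J ∈ 𝓘 u)
    (hfull : ∀ u, u ≠ t → {v | E u v} ∉ 𝓘 u)
    (ψ : V → EReal) {u : V} (hu : u ≠ t) :
    {v | E u v ∧ (r u v : EReal) + ψ v ≤ dijkF E t r 𝓘 ψ u} ∉ 𝓘 u := by
  set c := dijkF E t r 𝓘 ψ u with hc
  intro h
  set B : Set V := {v | E u v ∧ ¬ ((r u v : EReal) + ψ v ≤ c)} with hB
  have hBne : B.Nonempty := by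
    by_contra hne
    rw [Set.not_nonempty_iff_eq_empty] at hne
    refine hfull u hu (hdc u hu _ h _ ?_)
    intro v hv
    refine ⟨hv, ?_⟩
    by_contra hlt
    have hvB : v ∈ B := ⟨hv, hlt⟩
    rw [hne] at hvB
    exact hvB
  set T : Set EReal := (fun v => (r u v : EReal) + ψ v) '' B with hT
  have hTfin : T.Finite := (Set.toFinite B).image _
  have hTne : T.Nonempty := hBne.image _
  have hmem : sInf T ∈ T := Set.Nonempty.csInf_mem hTne hTfin
  obtain ⟨v₀, hv₀, hv₀eq⟩ := hmem
  have hclt : c < sInf T := by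
    rw [← hv₀eq]
    exact not_le.1 hv₀.2
  have hle : sInf T ≤ c := by
    rw [hc, dijkF, if_neg hu]
    refine le_sInf ?_
    intro d hd
    by_contra hdlt
    rw [not_le] at hdlt
    refine hd (hdc u hu _ h _ ?_)
    intro v hv
    refine ⟨hv.1, ?_⟩
    by_contra hvc
    have : sInf T ≤ (r u v : EReal) + ψ v := sInf_le ⟨v, ⟨hv.1, hvc⟩, rfl⟩
    exact absurd (this.trans hv.2) (not_le.2 hdlt)
  exact absurd hle (not_le.2 hclt)

/-- Every blocked distance function is a post-fixed point of the operator. -/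
lemma blockedDist_le_dijkF [Fintype V] (E : V → V → Prop) (t : V) (r : V → V → ℝ)
    (𝓘 : V → Set (Set V))
    (hnn : ∀ a b, E a b → 0 ≤ r a b)
    (hdc : ∀ u, u ≠ t → ∀ I ∈ 𝓘 u, ∀ J ⊆ I, J ∈ 𝓘 u)
    (hfull : ∀ u, u ≠ t → {v | E u v} ∉ 𝓘 u)
    (I : V → Set V) (hI : ∀ w, w ≠ t → I w ∈ 𝓘 w) :
    blockedDist E r t I ≤ dijkF E t r 𝓘 (blockedDist E r t I) := by
  intro u
  by_cases hu : u = t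
  · subst hu
    rw [dijkF, if_pos rfl]
    exact blockedDist_self_le E r u I
  · have hdep := dijkF_mem E t r 𝓘 hdc hfull (blockedDist E r t I) hu
    have hns : ¬ ({v | E u v ∧ (r u v : EReal) + blockedDist E r t I v ≤
        dijkF E t r 𝓘 (blockedDist E r t I) u} ⊆ I u) := by
      intro hss
      exact hdep (hdc u hu _ (hI u hu) _ hss)
    obtain ⟨v, hv, hvI⟩ := Set.not_subset.1 hns
    exact (blockedDist_triangle E r t I hnn hv.1 hvI).trans
      ((add_le_add_left le_rfl _).trans hv.2)

/-- Telescoping: along any path all of whose arcs satisfy the slack inequality,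
`φ` at the start is at most the cost. -/
lemma telescope (E : V → V → Prop) (t : V) (r : V → V → ℝ) (Ihat : V → Set V)
    (htermt : ∀ w, ¬ E t w) (φ : V → EReal) (hphit : φ t = 0)
    (hstep : ∀ a b, a ≠ t → E a b → b ∉ Ihat a → φ a ≤ (r a b : EReal) + φ b) :
    ∀ (p : List V) (u : V), IsPathL (fun a b => E a b ∧ b ∉ Ihat a) u t p →
      φ u ≤ ((pathCost r p : ℝ) : EReal) := by
  intro p
  induction p with
  | nil => intro u hp; simp [IsPathL] at hp
  | cons a q ih =>
    intro u hp
    obtain ⟨hchain, hhead, hlast, hnodup⟩ := hp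
    have hau : a = u := by simpa using hhead
    subst hau
    cases q with
    | nil =>
      have hat : a = t := by simpa using hlast
      subst hat
      simp [pathCost, hphit]
    | cons b l =>
      have harc := (List.isChain_cons_cons.1 hchain).1
      have hat : a ≠ t := fun h => htermt b (h ▸ harc.1)
      have hbl : φ b ≤ ((pathCost r (b :: l) : ℝ) : EReal) := by
        refine ih b ⟨(List.isChain_cons_cons.1 hchain).2, rfl, ?_, (List.nodup_cons.1 hnodup).2⟩
        rwa [List.getLast?_cons_cons] at hlast
      calc φ a ≤ (r a b : EReal) + φ b := hstep a b hat harc.1 harc.2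
        _ ≤ (r a b : EReal) + ((pathCost r (b :: l) : ℝ) : EReal) := add_le_add_right hbl _
        _ = ((pathCost r (a :: b :: l) : ℝ) : EReal) := by
            rw [pathCost_cons]; exact_mod_cast rfl

/-- specification of the modified Dijkstra algorithm: for a finite digraph
with nonnegative weights, target `t` and blocking (independence) systems `𝓘(u)` on the
out-neighborhoods with the full out-neighborhood dependent, there exist `φ` and blocking
sets `Ihat(u) ∈ 𝓘(u)` satisfying the four output conditions, and consequently `φ(u)` equals
the maximum over all admissible subgraphs of the shortest `r`-distance from `u` to `t`. -/
theorem modified_dijkstra_spec [Fintype V]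
    (E : V → V → Prop) (t : V) (r : V → V → ℝ)
    (hnn : ∀ u v, E u v → 0 ≤ r u v)
    (htermt : ∀ w, ¬ E t w)
    (𝓘 : V → Set (Set V))
    (hsub : ∀ u, u ≠ t → ∀ I ∈ 𝓘 u, I ⊆ {v | E u v})
    (hempty : ∀ u, u ≠ t → ∅ ∈ 𝓘 u)
    (hdc : ∀ u, u ≠ t → ∀ I ∈ 𝓘 u, ∀ J ⊆ I, J ∈ 𝓘 u)
    (hfull : ∀ u, u ≠ t → {v | E u v} ∉ 𝓘 u) :
    ∃ (φ : V → EReal) (Ihat : V → Set V), φ t = 0 ∧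
      (∀ u, u ≠ t → Ihat u ∈ 𝓘 u) ∧
      (∀ u, u ≠ t → ∀ v ∈ Ihat u, (r u v : EReal) + φ v ≤ φ u) ∧
      (∀ u, u ≠ t → ∀ v, E u v → v ∉ Ihat u → φ u ≤ (r u v : EReal) + φ v) ∧
      (∀ u, u ≠ t → ∃ v, E u v ∧ v ∉ Ihat u ∧ φ u = (r u v : EReal) + φ v) ∧
      (∀ u, u ≠ t → {v | E u v ∧ (r u v : EReal) + φ v ≤ φ u} ∉ 𝓘 u) ∧
      (∀ u, φ u = sSup {d : EReal | ∃ I : V → Set V,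
        (∀ w, w ≠ t → I w ∈ 𝓘 w) ∧ d = blockedDist E r t I u}) := by
  set F : (V → EReal) →o (V → EReal) := ⟨dijkF E t r 𝓘, dijkF_mono E t r 𝓘 hdc⟩ with hF
  set φ : V → EReal := F.gfp with hφ
  have hfix : ∀ u, dijkF E t r 𝓘 φ u = φ u := fun u => congrFun F.map_gfp u
  have hphit : φ t = 0 := by rw [← hfix t, dijkF, if_pos rfl]
  set Ihat : V → Set V := fun u => {v | E u v ∧ (r u v : EReal) + φ v < φ u} with hIhat
  -- condition (iv): the set of tight-or-better arcs is dependent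
  have cond5 : ∀ u, u ≠ t → {v | E u v ∧ (r u v : EReal) + φ v ≤ φ u} ∉ 𝓘 u := by
    intro u hu
    have := dijkF_mem E t r 𝓘 hdc hfull φ hu
    rwa [hfix u] at this
  -- condition (0): the blocking sets are independent
  have cond1 : ∀ u, u ≠ t → Ihat u ∈ 𝓘 u := by
    intro u hu
    by_cases hne : (Ihat u).Nonempty
    · by_contra hI
      set T : Set EReal := (fun v => (r u v : EReal) + φ v) '' Ihat u with hT
      have hmem : sSup T ∈ T := Set.Nonempty.csSup_mem (hne.image _) ((Set.toFinite _).image _)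
      obtain ⟨v₀, hv₀, hv₀eq⟩ := hmem
      have hlt : sSup T < φ u := hv₀eq ▸ hv₀.2
      have heq : {v | E u v ∧ (r u v : EReal) + φ v ≤ sSup T} = Ihat u := by
        ext v
        constructor
        · rintro ⟨hE, hle⟩; exact ⟨hE, lt_of_le_of_lt hle hlt⟩
        · rintro ⟨hE, hltv⟩; exact ⟨hE, le_sSup ⟨v, ⟨hE, hltv⟩, rfl⟩⟩
      have : φ u ≤ sSup T := by
        have := dijkF_le E t r 𝓘 φ hu (heq ▸ hI)
        rwa [hfix u] at this
      exact absurd this (not_le.2 hlt)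
    · rw [Set.not_nonempty_iff_eq_empty] at hne
      rw [hne]
      exact hempty u hu
  have cond3 : ∀ u, u ≠ t → ∀ v, E u v → v ∉ Ihat u → φ u ≤ (r u v : EReal) + φ v := by
    intro u hu v hE hv
    by_contra h
    exact hv ⟨hE, not_le.1 h⟩
  refine ⟨φ, Ihat, hphit, cond1, ?_, cond3, ?_, cond5, ?_⟩
  · intro u hu v hv
    exact hv.2.le
  · -- existence of a tight unblocked arc
    intro u hu
    have hns : ¬ ({v | E u v ∧ (r u v : EReal) + φ v ≤ φ u} ⊆ Ihat u) := by
      intro hss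
      exact cond5 u hu (hdc u hu _ (cond1 u hu) _ hss)
    obtain ⟨v, hv, hvI⟩ := Set.not_subset.1 hns
    refine ⟨v, hv.1, hvI, ?_⟩
    have : ¬ ((r u v : EReal) + φ v < φ u) := fun h => hvI ⟨hv.1, h⟩
    exact le_antisymm (not_lt.1 this) hv.2
  · -- the max-min characterization
    intro u
    refine le_antisymm ?_ ?_
    · refine le_sSup_of_le ⟨Ihat, cond1, rfl⟩ ?_
      refine le_sInf ?_
      rintro c ⟨p, hp, rfl⟩
      exact telescope E t r Ihat htermt φ hphit
        (fun a b ha hE hb => cond3 a ha b hE hb) p u hp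
    · refine sSup_le ?_
      rintro d ⟨I, hI, rfl⟩
      exact OrderHom.le_gfp F
        (blockedDist_le_dijkF E t r 𝓘 hnn hdc hfull I hI) u
end
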